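/- Let A be a normed algebra (possibly non-unital) with the property that for every a ∈ A and every power series f around 0 ∈ ℂ with radius of convergence strictly greater than ‖a‖ (and f(0) = 0 if A is non-unital), the element f(a) belongs to A. Then A is closed under holomorphic functional calculus in its C*-completion. -/

import Mathlib

open Metric

section SchmittAux

open Complex Filter ENNReal NNReal

variable {B : Type*} [NormedRing B] [NormedAlgebra ℂ B] [CompleteSpace B]

set_option linter.unusedSectionVars false

theorem schmitt_hasSum_circleIntegral {F : ℕ → ℂ → B} {f : ℂ → B} {c : ℂ} {R : ℝ} (hR : 0 < R)
    (hFc : ∀ n, ContinuousOn (F n) (sphere c R))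
    (bound : ℕ → ℝ) (hb : ∀ n, ∀ z ∈ sphere c R, ‖F n z‖ ≤ bound n) (hsb : Summable bound)
    (hsum : ∀ z ∈ sphere c R, HasSum (fun n => F n z) (f z)) :
    HasSum (fun n => ∮ z in C(c, R), F n z) (∮ z in C(c, R), f z) := by
  simp only [circleIntegral]
  apply intervalIntegral.hasSum_integral_of_dominated_convergence
    (fun n _ => R * bound n)
  · intro n
    apply Continuous.aestronglyMeasurable
    have : Continuous fun θ => deriv (circleMap c R) θ := by
      simp only [deriv_circleMap]
      exact (continuous_circleMap 0 R).mul continuous_const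
    exact this.smul <|
      (hFc n).comp_continuous (continuous_circleMap c R) fun θ => circleMap_mem_sphere c hR.le θ
  · intro n
    filter_upwards with θ _
    rw [norm_smul, deriv_circleMap, mul_comm]
    have h1 : ‖circleMap 0 R θ * I‖ = R := by
      simp [norm_mul, norm_circleMap_zero, abs_of_pos hR]
    rw [h1, mul_comm]
    have := hb n _ (circleMap_mem_sphere c hR.le θ)
    nlinarith [norm_nonneg (F n (circleMap c R θ))]
  · filter_upwards with θ _
    exact hsb.mul_left R
  · exact intervalIntegrable_const
  · filter_upwards with θ _
    exact (hsum _ (circleMap_mem_sphere c hR.le θ)).const_smul _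

theorem schmitt_hasSum_inverse (b : B) (w : ℂ) (hw : ‖b‖ < ‖w‖) :
    HasSum (fun m : ℕ => (w⁻¹) ^ (m + 1) • b ^ m) (Ring.inverse (w • (1 : B) - b)) := by
  have hw0 : w ≠ 0 := by
    intro h; rw [h, norm_zero] at hw; exact absurd hw (not_lt.2 (norm_nonneg b))
  set u : B := w⁻¹ • b with hu_def
  have hu : ‖u‖ < 1 := by
    rw [hu_def, norm_smul, norm_inv]
    rw [inv_mul_lt_iff₀ (lt_of_le_of_lt (norm_nonneg b) hw), mul_one]
    exact hw
  set v : Bˣ := Units.oneSub u hu with hv_def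
  have hvval : (v : B) = 1 - u := rfl
  have hfac : w • (1 : B) - b = (w • (1 : B)) * (v : B) := by
    rw [hvval]
    rw [mul_sub, mul_one, smul_mul_assoc, one_mul, smul_smul, mul_inv_cancel₀ hw0, one_smul]
  have h1 : (w • (1 : B) - b) * (w⁻¹ • (↑v⁻¹ : B)) = 1 := by
    rw [hfac, mul_smul_comm, mul_assoc, Units.mul_inv, mul_one, smul_smul,
      inv_mul_cancel₀ hw0, one_smul]
  have h2 : (w⁻¹ • (↑v⁻¹ : B)) * (w • (1 : B) - b) = 1 := by
    rw [hfac]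
    have : (w • (1 : B)) * (v : B) = w • (v : B) := by rw [smul_mul_assoc, one_mul]
    rw [this, smul_mul_assoc, mul_smul_comm, Units.inv_mul, smul_smul, inv_mul_cancel₀ hw0, one_smul]
  have hinv : Ring.inverse (w • (1 : B) - b) = w⁻¹ • (↑v⁻¹ : B) := by
    have : Ring.inverse ((⟨w • (1:B) - b, w⁻¹ • (↑v⁻¹ : B), h1, h2⟩ : Bˣ) : B)
        = w⁻¹ • (↑v⁻¹ : B) := Ring.inverse_unit _
    exact this
  rw [hinv]
  have hgeom : HasSum (fun m : ℕ => u ^ m) ((↑v⁻¹ : B)) := by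
    have := (summable_geometric_of_norm_lt_one hu).hasSum
    have he : ∑' m : ℕ, u ^ m = (↑v⁻¹ : B) := rfl
    rwa [he] at this
  have := hgeom.const_smul (w⁻¹ : ℂ)
  convert this using 2 with m
  rw [hu_def, smul_pow, smul_smul, pow_succ, mul_comm]

theorem schmitt_circleIntegral_pow_smul_inverse (b : B) (c : ℂ) {R : ℝ} (hR : ‖b‖ < R) (n : ℕ) :
    (∮ z in C(c, R), (z - c) ^ n • Ring.inverse ((z - c) • (1 : B) - b))
      = (2 * Real.pi * Complex.I) • b ^ n := by
  have hR0 : 0 < R := lt_of_le_of_lt (norm_nonneg b) hR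
  set F : ℕ → ℂ → B := fun m z => ((z - c) ^ n * ((z - c)⁻¹) ^ (m + 1)) • b ^ m with hF
  have hzc : ∀ z ∈ sphere c R, ‖z - c‖ = R := fun z hz => mem_sphere_iff_norm.1 hz
  have hzc0 : ∀ z ∈ sphere c R, z - c ≠ 0 := by
    intro z hz h
    rw [← norm_eq_zero] at h
    rw [hzc z hz] at h; exact hR0.ne' h
  set C : ℝ := max 1 ‖(1 : B)‖ with hC
  have hbm : ∀ m : ℕ, ‖b ^ m‖ ≤ C * ‖b‖ ^ m := by
    intro m
    rcases Nat.eq_zero_or_pos m with h | h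
    · simp [h, hC]
    · calc ‖b ^ m‖ ≤ ‖b‖ ^ m := norm_pow_le' b h
        _ ≤ C * ‖b‖ ^ m := by
          nlinarith [pow_nonneg (norm_nonneg b) m, le_max_left 1 ‖(1:B)‖]
  have key : HasSum (fun m => ∮ z in C(c, R), F m z)
      (∮ z in C(c, R), (z - c) ^ n • Ring.inverse ((z - c) • (1 : B) - b)) := by
    refine schmitt_hasSum_circleIntegral hR0 ?_ (fun m => R ^ n * R⁻¹ * C * (‖b‖ / R) ^ m) ?_ ?_ ?_
    · intro m
      apply ContinuousOn.smul _ continuousOn_const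
      apply ContinuousOn.mul (((continuousOn_id.sub continuousOn_const)).pow n)
      exact (((continuousOn_id.sub continuousOn_const)).inv₀ hzc0).pow (m + 1)
    · intro m z hz
      rw [hF, norm_smul, norm_mul, norm_pow, norm_pow, norm_inv, hzc z hz]
      calc R ^ n * (R⁻¹) ^ (m + 1) * ‖b ^ m‖ ≤ R ^ n * (R⁻¹) ^ (m + 1) * (C * ‖b‖ ^ m) :=
            mul_le_mul_of_nonneg_left (hbm m) (by positivity)
        _ = R ^ n * R⁻¹ * C * (‖b‖ / R) ^ m := by
            rw [div_pow]
            rw [div_eq_mul_inv, ← inv_pow]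
            ring
    · apply Summable.mul_left
      exact summable_geometric_of_lt_one (by positivity) (div_lt_one hR0 |>.2 hR)
    · intro z hz
      have hw : ‖b‖ < ‖z - c‖ := by rw [hzc z hz]; exact hR
      have := (schmitt_hasSum_inverse b (z - c) hw).const_smul ((z - c) ^ n)
      convert this using 2 with m
      rw [hF, smul_smul]
  have heval : ∀ m : ℕ, (∮ z in C(c, R), F m z)
      = if m = n then (2 * Real.pi * Complex.I) • b ^ n else 0 := by
    intro m
    rw [hF]
    rw [circleIntegral.integral_smul_const]
    have hcongr : (∮ z in C(c, R), (z - c) ^ n * ((z - c)⁻¹) ^ (m + 1))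
        = ∮ z in C(c, R), (z - c) ^ ((n : ℤ) - (m + 1)) := by
      apply circleIntegral.integral_congr hR0.le
      intro z hz
      have h0 := hzc0 z hz
      show (z - c) ^ n * ((z - c)⁻¹) ^ (m + 1) = (z - c) ^ ((n : ℤ) - (m + 1))
      have hcast : ((m : ℤ) + 1) = ((m + 1 : ℕ) : ℤ) := by push_cast; ring
      rw [zpow_sub₀ h0, zpow_natCast, hcast, zpow_natCast, div_eq_mul_inv, inv_pow]
    rw [hcongr]
    rcases eq_or_ne m n with h | h
    · subst h
      have : ((m : ℤ) - (m + 1)) = -1 := by ring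
      rw [this]
      simp only [zpow_neg_one]
      rw [circleIntegral.integral_sub_inv_of_mem_ball (mem_ball_self hR0)]
      simp
    · rw [circleIntegral.integral_sub_zpow_of_ne, zero_smul, if_neg h]
      intro hc
      omega
  have h2 : HasSum (fun m => ∮ z in C(c, R), F m z) ((2 * Real.pi * Complex.I) • b ^ n) := by
    simp_rw [heval]
    exact hasSum_ite_eq n _
  exact key.unique h2

theorem schmitt_tsum_mem (A : Subalgebra ℂ B)
    (hA : ∀ a ∈ A, ∀ (f : ℕ → ℂ) (x : ℝ), ‖a‖ < x → f 0 = 0 →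
      Summable (fun i : ℕ => ‖f i‖ * x ^ i) → (∑' i : ℕ, f i • a ^ i) ∈ A)
    (b : B) (hb : b ∈ A) (co : ℕ → ℂ) (t : ℝ) (ht : 0 < t) (k : ℕ) (hk : 0 < k)
    (hbk : ‖b ^ k‖ < t ^ k) (hsum : Summable fun n => ‖co n‖ * t ^ n) :
    (∑' n : ℕ, co n • b ^ n) ∈ A := by
  haveI : NeZero k := ⟨hk.ne'⟩
  -- uniform bound ‖b ^ n‖ ≤ C * t ^ n
  obtain ⟨C, hC0, hC⟩ : ∃ C : ℝ, 0 < C ∧ ∀ n : ℕ, ‖b ^ n‖ ≤ C * t ^ n := by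
    set S := (Finset.range k).sup' ⟨0, Finset.mem_range.2 hk⟩ (fun j => ‖b ^ j‖ / t ^ j) with hS
    have hS0 : (0:ℝ) ≤ S := by
      refine le_trans ?_ (Finset.le_sup' _ (Finset.mem_range.2 hk))
      positivity
    refine ⟨S + 1, by linarith, ?_⟩
    intro n
    have hmod : n % k < k := Nat.mod_lt n hk
    have hkey : ∀ j < k, ∀ m : ℕ, ‖b ^ (j + k * m)‖ ≤ S * t ^ (j + k * m) := by
      intro j hj m
      have hSj : ‖b ^ j‖ ≤ S * t ^ j := by
        have := Finset.le_sup' (fun j => ‖b ^ j‖ / t ^ j) (Finset.mem_range.2 hj)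
        rw [div_le_iff₀ (by positivity)] at this
        simpa [mul_comm] using this
      rcases Nat.eq_zero_or_pos m with h | h
      · simpa [h] using hSj
      have h2 : ‖(b ^ k) ^ m‖ ≤ (t ^ k) ^ m := by
        calc ‖(b ^ k) ^ m‖ ≤ ‖b ^ k‖ ^ m := norm_pow_le' _ h
          _ ≤ (t ^ k) ^ m := pow_le_pow_left₀ (norm_nonneg _) hbk.le _
      have hd : b ^ (j + k * m) = b ^ j * (b ^ k) ^ m := by
        rw [pow_add, pow_mul]
      calc ‖b ^ (j + k * m)‖ ≤ ‖b ^ j‖ * ‖(b ^ k) ^ m‖ := hd ▸ norm_mul_le _ _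
        _ ≤ (S * t ^ j) * (t ^ k) ^ m :=
            mul_le_mul hSj h2 (norm_nonneg _) (by positivity)
        _ = S * t ^ (j + k * m) := by rw [pow_add, pow_mul]; ring
    calc ‖b ^ n‖ = ‖b ^ (n % k + k * (n / k))‖ := by rw [Nat.mod_add_div n k]
      _ ≤ S * t ^ (n % k + k * (n / k)) := hkey _ hmod _
      _ = S * t ^ n := by rw [Nat.mod_add_div n k]
      _ ≤ (S + 1) * t ^ n := by nlinarith [pow_pos ht n]
  -- summability facts
  have hnormbd : ∀ n, ‖co n • b ^ n‖ ≤ C * (‖co n‖ * t ^ n) := by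
    intro n
    rw [norm_smul]
    calc ‖co n‖ * ‖b ^ n‖ ≤ ‖co n‖ * (C * t ^ n) :=
          mul_le_mul_of_nonneg_left (hC n) (norm_nonneg _)
      _ = C * (‖co n‖ * t ^ n) := by ring
  have hnormsum : Summable (fun n => ‖co n • b ^ n‖) :=
    Summable.of_nonneg_of_le (fun n => norm_nonneg _) hnormbd (hsum.mul_left C)
  have hsummable : Summable (fun n => co n • b ^ n) := hnormsum.of_norm
  have hinj : ∀ j : ℕ, Function.Injective (fun m : ℕ => m * k + j) := by
    intro j x y h
    simp only at h
    have h2 : x * k = y * k := by omega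
    exact Nat.eq_of_mul_eq_mul_right hk h2
  have hinner : ∀ j : ℕ, Summable (fun m : ℕ => co (m * k + j) • b ^ (m * k + j)) := by
    intro j
    exact (hnormsum.comp_injective (hinj j)).of_norm
  have hpowdecomp : ∀ (j m : ℕ), b ^ (m * k + j) = b ^ j * (b ^ k) ^ m := by
    intro j m
    rw [add_comm, pow_add, mul_comm m k, pow_mul]
  have hsubt : ∀ j : ℕ, Summable (fun m : ℕ => ‖co (m * k + j)‖ * t ^ (m * k)) := by
    intro j
    have h1 : Summable (fun m : ℕ => (‖co (m * k + j)‖ * t ^ (m * k + j)) * (t ^ j)⁻¹) :=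
      (hsum.comp_injective (hinj j)).mul_right _
    apply h1.congr
    intro m
    rw [pow_add]
    field_simp
  have hinner' : ∀ j : ℕ, Summable (fun m : ℕ => co (m * k + j) • (b ^ k) ^ m) := by
    intro j
    apply Summable.of_norm
    apply Summable.of_nonneg_of_le (fun m => norm_nonneg _) (fun m => ?_)
      ((hsubt j).mul_left C)
    rw [norm_smul]
    calc ‖co (m * k + j)‖ * ‖(b ^ k) ^ m‖ ≤ ‖co (m * k + j)‖ * (C * t ^ (k * m)) := by
          apply mul_le_mul_of_nonneg_left _ (norm_nonneg _)
          rw [← pow_mul]; exact hC _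
      _ = C * (‖co (m * k + j)‖ * t ^ (m * k)) := by rw [mul_comm k m]; ring
  -- each inner sum is in A
  have hmem : ∀ j : ℕ, j < k → (∑' m : ℕ, co (m * k + j) • (b ^ k) ^ m) ∈ A := by
    intro j hj
    set g : ℕ → ℂ := fun m => if m = 0 then 0 else co (m * k + j) with hg
    have hXmem : (∑' m : ℕ, g m • (b ^ k) ^ m) ∈ A := by
      apply hA (b ^ k) (pow_mem hb k) g (t ^ k) hbk (by simp [hg])
      apply Summable.of_nonneg_of_le (fun m => by positivity) (fun m => ?_) (hsubt j)
      have hgle : ‖g m‖ ≤ ‖co (m * k + j)‖ := by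
        rw [hg]
        rcases eq_or_ne m 0 with h | h <;> simp [h]
      calc ‖g m‖ * (t ^ k) ^ m ≤ ‖co (m * k + j)‖ * (t ^ k) ^ m := by
            apply mul_le_mul_of_nonneg_right hgle (by positivity)
        _ = ‖co (m * k + j)‖ * t ^ (m * k) := by rw [← pow_mul, mul_comm k m]
    have hsplit : (fun m : ℕ => co (m * k + j) • (b ^ k) ^ m)
        = (fun m : ℕ => g m • (b ^ k) ^ m + (if m = 0 then co j • (1 : B) else 0)) := by
      funext m
      rcases eq_or_ne m 0 with h | h <;> simp [hg, h]
    have hgsum : Summable (fun m : ℕ => g m • (b ^ k) ^ m) := by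
      apply Summable.of_norm
      apply Summable.of_nonneg_of_le (fun m => norm_nonneg _) (fun m => ?_)
        ((hsubt j).mul_left C)
      rw [norm_smul]
      have hgle : ‖g m‖ ≤ ‖co (m * k + j)‖ := by
        rw [hg]
        rcases eq_or_ne m 0 with h | h <;> simp [h]
      calc ‖g m‖ * ‖(b ^ k) ^ m‖ ≤ ‖co (m * k + j)‖ * (C * t ^ (k * m)) := by
            apply mul_le_mul hgle ?_ (norm_nonneg _) (norm_nonneg _)
            rw [← pow_mul]; exact hC _
        _ = C * (‖co (m * k + j)‖ * t ^ (m * k)) := by rw [mul_comm k m]; ring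
    have hisum : Summable (fun m : ℕ => if m = 0 then co j • (1 : B) else 0) :=
      summable_of_finite_support (by
        apply Set.Finite.subset (Set.finite_singleton 0)
        intro m hm
        by_contra h
        simp only [Function.mem_support] at hm
        exact hm (if_neg h))
    rw [hsplit, Summable.tsum_add hgsum hisum, tsum_ite_eq]
    exact A.add_mem hXmem (A.smul_mem A.one_mem _)
  -- reindex the full sum
  set F : ℕ × Fin k → B := fun p => co (p.1 * k + (p.2 : ℕ)) • b ^ (p.1 * k + (p.2 : ℕ)) with hF
  have h1 : (∑' n : ℕ, co n • b ^ n) = ∑' p : ℕ × Fin k, F p := by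
    rw [← Equiv.tsum_eq (Nat.divModEquiv k).symm (fun n => co n • b ^ n)]
    rfl
  have hFsum : Summable F := by
    have h2 := ((Nat.divModEquiv k).symm).summable_iff.2 hsummable
    exact h2
  have h2 : ∑' p : ℕ × Fin k, F p = ∑' m : ℕ, ∑ j : Fin k, F (m, j) := by
    rw [Summable.tsum_prod' hFsum (fun m => Summable.of_finite)]
    congr 1
    funext m
    exact tsum_fintype _
  have h3 : ∑' m : ℕ, ∑ j : Fin k, F (m, j) = ∑ j : Fin k, ∑' m : ℕ, F (m, j) := by
    apply Summable.tsum_finsetSum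
    intro j _
    exact hinner (j : ℕ)
  rw [h1, h2, h3]
  apply Subalgebra.sum_mem
  intro j _
  have h4 : (fun m : ℕ => F (m, j)) = fun m : ℕ => b ^ (j : ℕ) * (co (m * k + (j : ℕ)) • (b ^ k) ^ m) := by
    funext m
    rw [hF]
    simp only
    rw [hpowdecomp, mul_smul_comm]
  have h5 : ∑' m : ℕ, F (m, j) = b ^ (j : ℕ) * ∑' m : ℕ, co (m * k + (j : ℕ)) • (b ^ k) ^ m := by
    rw [h4]
    exact Summable.tsum_mul_left _ (hinner' (j : ℕ))
  rw [h5]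
  exact A.mul_mem (pow_mem hb _) (hmem _ j.isLt)


theorem schmitt_exists_pow_lt (b : B) {t : ℝ} (ht : 0 < t)
    (h : spectralRadius ℂ b < ENNReal.ofReal t) : ∃ k : ℕ, 0 < k ∧ ‖b ^ k‖ < t ^ k := by
  have htend := spectrum.pow_nnnorm_pow_one_div_tendsto_nhds_spectralRadius b
  have hev : ∀ᶠ n : ℕ in atTop, (‖b ^ n‖₊ : ℝ≥0∞) ^ (1 / (n : ℝ)) < ENNReal.ofReal t :=
    htend.eventually_lt_const h
  obtain ⟨N, hN⟩ := eventually_atTop.1 hev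
  refine ⟨max N 1, lt_of_lt_of_le one_pos (le_max_right N 1), ?_⟩
  set k := max N 1 with hk
  have hk1 : 1 ≤ k := le_max_right N 1
  have hkN : N ≤ k := le_max_left N 1
  have hkey := hN k hkN
  have hk0 : (0 : ℝ) < k := by positivity
  have h2 : ((‖b ^ k‖₊ : ℝ≥0∞) ^ (1 / (k : ℝ))) ^ (k : ℝ) < (ENNReal.ofReal t) ^ (k : ℝ) :=
    ENNReal.rpow_lt_rpow hkey hk0
  rw [← ENNReal.rpow_mul, one_div, inv_mul_cancel₀ hk0.ne', ENNReal.rpow_one] at h2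
  rw [ENNReal.ofReal_rpow_of_pos ht, Real.rpow_natCast] at h2
  rw [← ENNReal.ofReal_coe_nnreal, coe_nnnorm] at h2
  exact (ENNReal.ofReal_lt_ofReal_iff_of_nonneg (norm_nonneg _)).1 h2

end SchmittAux

section SchmittMain

open Complex Filter Pointwise

/-- Schmitt's criterion: let `A` be a (dense) subalgebra of a C*-algebra
`B` with the property that for every `a ∈ A` and every power series `f = ∑_{i≥1} fᵢ xⁱ`
around `0` with vanishing constant term and radius of convergence strictly greater than
`‖a‖`, the element `f(a) = ∑_{i} fᵢ aⁱ` belongs to `A`.  Then `A` is closed under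
holomorphic functional calculus: for `a ∈ A` and `f` holomorphic on a closed disc whose
interior contains the spectrum of `a` (with `f 0 = 0`), the element `f(a)` defined by
the Cauchy integral `(2πi)⁻¹ ∮ f(z)(z·1 - a)⁻¹ dz` lies in `A`. -/
theorem schmitt_criterion_holomorphic_functional_calculus
    {B : Type*} [NormedRing B] [NormedAlgebra ℂ B] [CompleteSpace B]
    [StarRing B] [CStarRing B]
    (A : Subalgebra ℂ B) (hdense : Dense (A : Set B))
    (hA : ∀ a ∈ A, ∀ (f : ℕ → ℂ) (x : ℝ), ‖a‖ < x → f 0 = 0 →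
      Summable (fun i : ℕ => ‖f i‖ * x ^ i) → (∑' i : ℕ, f i • a ^ i) ∈ A) :
    ∀ a ∈ A, ∀ (c : ℂ) (r : ℝ) (f : ℂ → ℂ), 0 < r →
      spectrum ℂ a ⊆ Metric.ball c r →
      DifferentiableOn ℂ f (Metric.closedBall c r) →
      f 0 = 0 →
      (((2 * Real.pi * Complex.I)⁻¹ : ℂ) •
          ∮ z in C(c, r), f z • Ring.inverse (z • (1 : B) - a)) ∈ A := by
  intro a ha c r f hr hspec hfd hf0
  -- differentiability of the resolvent-type function
  have hres_eq : (fun z : ℂ => Ring.inverse (z • (1 : B) - a)) = resolvent a := by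
    funext w
    rw [resolvent, Algebra.algebraMap_eq_smul_one]
  have hres_diff : ∀ z : ℂ, z ∉ spectrum ℂ a →
      DifferentiableAt ℂ (fun z : ℂ => Ring.inverse (z • (1 : B) - a)) z := by
    intro z hz
    rw [hres_eq]
    exact (spectrum.hasDerivAt_resolvent (spectrum.notMem_iff.mp hz)).differentiableAt
  -- choose ρ with spectrum ⊆ ball c ρ, 0 < ρ < r
  obtain ⟨ρ, hρ0, hρr, hρspec⟩ : ∃ ρ : ℝ, 0 < ρ ∧ ρ < r ∧ spectrum ℂ a ⊆ ball c ρ := by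
    rcases (spectrum ℂ a).eq_empty_or_nonempty with h | h
    · exact ⟨r / 2, by linarith, by linarith, by simp [h]⟩
    · obtain ⟨x₀, hx₀K, hmax⟩ := (spectrum.isCompact a).exists_isMaxOn h
        ((continuous_id.dist continuous_const).continuousOn)
      have hx₀r : dist x₀ c < r := mem_ball.1 (hspec hx₀K)
      refine ⟨(dist x₀ c + r) / 2, by positivity, by linarith, ?_⟩
      intro x hx
      have := hmax hx
      simp only [Function.comp] at this
      exact mem_ball.2 (by dsimp at this ⊢; linarith)
  set b : B := a - algebraMap ℂ B c with hbdef
  have hb : b ∈ A := A.sub_mem ha (A.algebraMap_mem c)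
  have hzb : ∀ z : ℂ, z • (1 : B) - a = (z - c) • (1 : B) - b := by
    intro z
    rw [hbdef, sub_smul, Algebra.algebraMap_eq_smul_one]
    abel
  -- power series of f
  set R' : NNReal := r.toNNReal with hR'
  have hR'coe : (R' : ℝ) = r := Real.coe_toNNReal r hr.le
  set p := cauchyPowerSeries f c (R' : ℝ) with hp_def
  have hp : HasFPowerSeriesOnBall f p c R' := by
    have hfd' : DifferentiableOn ℂ f (closedBall c (R' : ℝ)) := by rw [hR'coe]; exact hfd
    exact hfd'.hasFPowerSeriesOnBall (Real.toNNReal_pos.2 hr)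
  -- t and k
  set t : ℝ := (ρ + r) / 2 with ht_def
  have ht0 : 0 < t := by positivity
  have hρt : ρ < t := by simp only [ht_def]; linarith
  have htr : t < r := by simp only [ht_def]; linarith
  have hsr : spectralRadius ℂ b < ENNReal.ofReal t := by
    have hσb : spectrum ℂ b = spectrum ℂ a - {c} := (spectrum.sub_singleton_eq a c).symm
    rcases (spectrum ℂ b).eq_empty_or_nonempty with h | h
    · rw [spectralRadius, h]
      simp only [Set.mem_empty_iff_false, iSup_false, iSup_bot]
      exact (ENNReal.ofReal_pos.2 ht0).trans_le' bot_le |>.trans_le le_rfl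
    · have : ENNReal.ofReal t = ((t.toNNReal : NNReal) : ENNReal) := rfl
      rw [this]
      apply spectrum.spectralRadius_lt_of_forall_lt_of_nonempty h
      intro x hx
      rw [hσb, Set.sub_singleton] at hx
      obtain ⟨y, hy, rfl⟩ := hx
      have h1 : ‖y - c‖ < ρ := by
        have := mem_ball.1 (hρspec hy)
        rwa [dist_eq_norm] at this
      rw [← norm_toNNReal]
      exact (Real.toNNReal_lt_toNNReal_iff ht0).2 (by linarith)

  obtain ⟨k, hk, hbk⟩ := schmitt_exists_pow_lt b ht0 hsr
  -- coefficient summability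
  have hcoef : ∀ s : ℝ, 0 < s → s < r → Summable (fun n => ‖p.coeff n‖ * s ^ n) := by
    intro s hs0 hsr'
    have h1 : ((s.toNNReal : NNReal) : ENNReal) < p.radius := by
      apply lt_of_lt_of_le _ hp.r_le
      rw [ENNReal.coe_lt_coe, hR', Real.toNNReal_lt_toNNReal_iff hr]
      exact hsr'
    have h2 := p.summable_norm_mul_pow h1
    apply h2.congr
    intro n
    rw [FormalMultilinearSeries.norm_apply_eq_norm_coef, Real.coe_toNNReal _ hs0.le]
  -- resolvent bound on the small sphere
  have hsph_nospec : ∀ z ∈ sphere c ρ, z ∉ spectrum ℂ a := by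
    intro z hz hzs
    have h1 := mem_ball.1 (hρspec hzs)
    rw [mem_sphere] at hz
    linarith
  obtain ⟨M, hM⟩ := (isCompact_sphere c ρ).exists_bound_of_continuousOn
    (fun z hz => ((hres_diff z (hsph_nospec z hz)).continuousAt).continuousWithinAt)
  -- shrink the contour
  have hshrink : (∮ z in C(c, r), f z • Ring.inverse (z • (1 : B) - a))
      = ∮ z in C(c, ρ), f z • Ring.inverse (z • (1 : B) - a) := by
    apply circleIntegral_eq_of_differentiable_on_annulus_off_countable hρ0 hρr.le
      Set.countable_empty
    · apply ContinuousOn.smul (hfd.continuousOn.mono Set.diff_subset)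
      intro z hz
      have hz2 : z ∉ spectrum ℂ a := fun hzs => hz.2 (hρspec hzs)
      exact ((hres_diff z hz2).continuousAt).continuousWithinAt
    · intro z hz
      have hz1 : z ∈ ball c r := hz.1.1
      have hz2 : z ∉ spectrum ℂ a := fun hzs => hz.1.2 (ball_subset_closedBall (hρspec hzs))
      have hfz : DifferentiableAt ℂ f z :=
        hfd.differentiableAt (mem_nhds_iff.2 ⟨ball c r, ball_subset_closedBall, isOpen_ball, hz1⟩)
      exact hfz.smul (hres_diff z hz2)
  -- value of the monomial integrals on the small circle
  have hmono : ∀ n : ℕ, (∮ z in C(c, ρ), (z - c) ^ n • Ring.inverse (z • (1 : B) - a))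
      = (2 * Real.pi * Complex.I) • b ^ n := by
    intro n
    set R₀ : ℝ := max ρ (‖b‖ + 1) with hR₀
    have hρR₀ : ρ ≤ R₀ := le_max_left _ _
    have hbR₀ : ‖b‖ < R₀ := lt_of_lt_of_le (by linarith) (le_max_right _ _)
    have hstep : (∮ z in C(c, R₀), (z - c) ^ n • Ring.inverse (z • (1 : B) - a))
        = ∮ z in C(c, ρ), (z - c) ^ n • Ring.inverse (z • (1 : B) - a) := by
      apply circleIntegral_eq_of_differentiable_on_annulus_off_countable hρ0 hρR₀
        Set.countable_empty
      · apply ContinuousOn.smul (((continuous_id.sub continuous_const).pow n).continuousOn)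
        intro z hz
        have hz2 : z ∉ spectrum ℂ a := fun hzs => hz.2 (hρspec hzs)
        exact ((hres_diff z hz2).continuousAt).continuousWithinAt
      · intro z hz
        have hz2 : z ∉ spectrum ℂ a := fun hzs => hz.1.2 (ball_subset_closedBall (hρspec hzs))
        exact ((differentiableAt_id.sub_const c).pow n).smul (hres_diff z hz2)
    rw [← hstep]
    simp_rw [hzb]
    exact schmitt_circleIntegral_pow_smul_inverse b c hbR₀ n
  -- HasSum over the small circle
  have hswap : HasSum
      (fun n => ∮ z in C(c, ρ), ((z - c) ^ n * p.coeff n) • Ring.inverse (z • (1 : B) - a))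
      (∮ z in C(c, ρ), f z • Ring.inverse (z • (1 : B) - a)) := by
    refine schmitt_hasSum_circleIntegral hρ0 ?_ (fun n => ‖p.coeff n‖ * ρ ^ n * M) ?_ ?_ ?_
    · intro n
      apply ContinuousOn.smul
        ((((continuous_id.sub continuous_const).pow n).mul continuous_const).continuousOn)
      intro z hz
      exact ((hres_diff z (hsph_nospec z hz)).continuousAt).continuousWithinAt
    · intro n z hz
      rw [norm_smul, norm_mul, norm_pow, mem_sphere_iff_norm.1 hz]
      calc ρ ^ n * ‖p.coeff n‖ * ‖Ring.inverse (z • (1 : B) - a)‖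
          ≤ ρ ^ n * ‖p.coeff n‖ * M :=
            mul_le_mul_of_nonneg_left (hM z hz) (by positivity)
        _ = ‖p.coeff n‖ * ρ ^ n * M := by ring
    · exact (hcoef ρ hρ0 hρr).mul_right M
    · intro z hz
      have hy : (z - c) ∈ Metric.eball (0 : ℂ) R' := by
        rw [Metric.mem_eball, edist_zero_right, enorm_eq_nnnorm, ENNReal.coe_lt_coe, ← NNReal.coe_lt_coe,
          coe_nnnorm, hR'coe, mem_sphere_iff_norm.1 hz]
        linarith
      have h0 := hp.hasSum hy
      simp_rw [FormalMultilinearSeries.apply_eq_pow_smul_coeff, smul_eq_mul] at h0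
      rw [add_sub_cancel] at h0
      exact h0.smul_const _
  have heach : ∀ n : ℕ,
      (∮ z in C(c, ρ), ((z - c) ^ n * p.coeff n) • Ring.inverse (z • (1 : B) - a))
        = p.coeff n • ((2 * Real.pi * Complex.I) • b ^ n) := by
    intro n
    rw [← hmono n, ← circleIntegral.integral_smul]
    apply circleIntegral.integral_congr hρ0.le
    intro z hz
    show ((z - c) ^ n * p.coeff n) • Ring.inverse (z • (1 : B) - a)
      = p.coeff n • ((z - c) ^ n • Ring.inverse (z • (1 : B) - a))
    rw [smul_smul, mul_comm]
  rw [funext heach] at hswap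
  -- finish
  rw [hshrink]
  have hne : (2 * (Real.pi : ℂ) * Complex.I : ℂ) ≠ 0 := by
    simp [Real.pi_ne_zero, Complex.I_ne_zero, Complex.ofReal_ne_zero]
  have hfinal : HasSum (fun n => p.coeff n • b ^ n)
      (((2 * Real.pi * Complex.I)⁻¹ : ℂ) •
        ∮ z in C(c, ρ), f z • Ring.inverse (z • (1 : B) - a)) := by
    have h1 := hswap.const_smul (((2 * Real.pi * Complex.I)⁻¹ : ℂ))
    convert h1 using 2 with n
    rw [smul_smul, smul_smul]
    congr 1
    field_simp
  rw [← hfinal.tsum_eq]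
  exact schmitt_tsum_mem A hA b hb _ t ht0 k hk hbk (hcoef t ht0 htr)

end SchmittMain
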